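/- With $H$ as above, for all $r>0$ one has the strict Cauchy–Schwarz inequality $H'(r)^2 < H(r)\,H''(r)$; equivalently, $\rho'(r)>0$ where $\rho(r)=H'(r)/H(r)$. -/

import Mathlib

open intervalIntegral Real
open MeasureTheory Metric

private lemma kpos (k : ℕ) (t r : ℝ) :
    0 < ∫ x in (0:ℝ)..π, (Real.cos x + t)^2 * Real.exp (-(r * Real.cos x)) * (Real.sin x) ^ k := by
  have hc : Continuous (fun x => (Real.cos x + t)^2 * Real.exp (-(r * Real.cos x)) * (Real.sin x) ^ k) := by
    fun_prop
  set f := fun x => (Real.cos x + t)^2 * Real.exp (-(r * Real.cos x)) * (Real.sin x) ^ k with hf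
  have hnonneg : ∀ x ∈ Set.Icc (0:ℝ) π, 0 ≤ f x := fun x hx => by
    have hs : 0 ≤ Real.sin x := Real.sin_nonneg_of_nonneg_of_le_pi hx.1 hx.2
    positivity
  have hpos : ∀ x ∈ Set.Ioo 0 π, Real.cos x + t ≠ 0 → 0 < f x := by
    intro x hx hne
    have hs : 0 < Real.sin x := Real.sin_pos_of_pos_of_lt_pi hx.1 hx.2
    have : 0 < (Real.cos x + t)^2 := by positivity
    positivity
  have h2 : (0:ℝ) < π/2 := by positivity
  have hpi : (π/2 : ℝ) < π := by linarith [Real.pi_pos]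
  have hint : ∀ a b : ℝ, IntervalIntegrable f volume a b := fun a b => hc.intervalIntegrable a b
  rcases le_or_gt 0 t with ht | ht
  · have hposl : 0 < ∫ x in (0:ℝ)..π/2, f x := by
      apply intervalIntegral_pos_of_pos_on (hint 0 (π/2)) _ h2
      intro x hx
      apply hpos x ⟨hx.1, hx.2.trans hpi⟩
      have : 0 < Real.cos x := Real.cos_pos_of_mem_Ioo ⟨by linarith [hx.1], hx.2⟩
      positivity
    have hnn : 0 ≤ ∫ x in (π/2:ℝ)..π, f x :=
      intervalIntegral.integral_nonneg hpi.le
        (fun x hx => hnonneg x ⟨le_trans h2.le hx.1, hx.2⟩)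
    have := intervalIntegral.integral_add_adjacent_intervals (hint 0 (π/2)) (hint (π/2) π)
    rw [← this]; linarith
  · have hposr : 0 < ∫ x in (π/2:ℝ)..π, f x := by
      apply intervalIntegral_pos_of_pos_on (hint (π/2) π) _ hpi
      intro x hx
      apply hpos x ⟨h2.trans hx.1, hx.2⟩
      have hcn : Real.cos x ≤ 0 :=
        Real.cos_nonpos_of_pi_div_two_le_of_le hx.1.le (by linarith [hx.2, Real.pi_pos])
      exact ne_of_lt (by linarith)
    have hnn : 0 ≤ ∫ x in (0:ℝ)..π/2, f x :=
      intervalIntegral.integral_nonneg h2.le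
        (fun x hx => hnonneg x ⟨hx.1, le_trans hx.2 hpi.le⟩)
    have := intervalIntegral.integral_add_adjacent_intervals (hint 0 (π/2)) (hint (π/2) π)
    rw [← this]; linarith

private lemma hpos_base (k : ℕ) (r : ℝ) :
    0 < ∫ x in (0:ℝ)..π, Real.exp (-(r * Real.cos x)) * (Real.sin x) ^ k := by
  apply intervalIntegral_pos_of_pos_on
    ((by fun_prop : Continuous fun x => Real.exp (-(r * Real.cos x)) * (Real.sin x) ^ k).intervalIntegrable 0 π)
    _ Real.pi_pos
  intro x hx
  have hs : 0 < Real.sin x := Real.sin_pos_of_pos_of_lt_pi hx.1 hx.2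
  positivity

private lemma deriv_under (k : ℕ) (g : ℝ → ℝ) (hg : Continuous g) (hgb : ∀ x, |g x| ≤ 1)
    (r : ℝ) :
    HasDerivAt (fun s => ∫ x in (0:ℝ)..π, g x * Real.exp (-(s * Real.cos x)) * (Real.sin x) ^ k)
      (∫ x in (0:ℝ)..π, g x * (-Real.cos x) * Real.exp (-(r * Real.cos x)) * (Real.sin x) ^ k)
      r := by
  have key := intervalIntegral.hasDerivAt_integral_of_dominated_loc_of_deriv_le
    (F := fun s x => g x * Real.exp (-(s * Real.cos x)) * (Real.sin x) ^ k)
    (F' := fun s x => g x * (-Real.cos x) * Real.exp (-(s * Real.cos x)) * (Real.sin x) ^ k)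
    (x₀ := r) (a := 0) (b := π) (μ := volume) (bound := fun _ => Real.exp (|r| + 1))
    (s := ball r 1) (ball_mem_nhds r one_pos)
    (Filter.Eventually.of_forall fun s =>
      ((by fun_prop : Continuous fun x => g x * Real.exp (-(s * Real.cos x)) * (Real.sin x) ^ k)).aestronglyMeasurable)
    ((by fun_prop : Continuous fun x => g x * Real.exp (-(r * Real.cos x)) * (Real.sin x) ^ k).intervalIntegrable 0 π)
    ((by fun_prop : Continuous fun x => g x * (-Real.cos x) * Real.exp (-(r * Real.cos x)) * (Real.sin x) ^ k)).aestronglyMeasurable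
    ?_ ((continuous_const).intervalIntegrable 0 π) ?_
  · exact key.2
  · apply Filter.Eventually.of_forall
    intro x _ s hs
    have h1 : |g x| ≤ 1 := hgb x
    have h2 : |Real.cos x| ≤ 1 := Real.abs_cos_le_one x
    have h3 : |Real.sin x| ≤ 1 := Real.abs_sin_le_one x
    have h4 : Real.exp (-(s * Real.cos x)) ≤ Real.exp (|r| + 1) := by
      apply Real.exp_le_exp.2
      have : |s - r| < 1 := by simpa [Real.dist_eq] using mem_ball.1 hs
      have hsabs : |s| < |r| + 1 := by
        calc |s| ≤ |r| + |s - r| := by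
              have := abs_sub_abs_le_abs_sub s r; linarith
          _ < |r| + 1 := by linarith
      calc -(s * Real.cos x) ≤ |s * Real.cos x| := neg_le_abs _
        _ = |s| * |Real.cos x| := abs_mul _ _
        _ ≤ |s| * 1 := by nlinarith [abs_nonneg s]
        _ ≤ |r| + 1 := by linarith
    calc ‖g x * (-Real.cos x) * Real.exp (-(s * Real.cos x)) * (Real.sin x) ^ k‖
        = |g x| * |Real.cos x| * Real.exp (-(s * Real.cos x)) * |Real.sin x| ^ k := by
          simp [abs_mul, abs_pow, Real.abs_exp]
      _ ≤ 1 * 1 * Real.exp (|r| + 1) * 1 := by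
          have hp : |Real.sin x| ^ k ≤ 1 := pow_le_one₀ (abs_nonneg _) h3
          gcongr
      _ = Real.exp (|r| + 1) := by ring
  · apply Filter.Eventually.of_forall
    intro x _ s _
    have hE : HasDerivAt (fun s => Real.exp (-(s * Real.cos x)))
        (Real.exp (-(s * Real.cos x)) * (-Real.cos x)) s := by
      have : HasDerivAt (fun s : ℝ => -(s * Real.cos x)) (-Real.cos x) s := by
        exact (((hasDerivAt_id s).mul_const (Real.cos x)).neg).congr_deriv (by simp)
      exact this.exp
    have := (hE.const_mul (g x)).mul_const ((Real.sin x) ^ k)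
    exact this.congr_deriv (by ring)

/-- Strict Cauchy–Schwarz for `H`: for all `r > 0`,
`H'(r)² < H(r) H''(r)`; equivalently `ρ'(r) > 0` where `ρ = H'/H`. -/
theorem stmt10 (n : ℕ) (hn : 1 ≤ n) (H H1 H2 : ℝ → ℝ)
    (hH : ∀ r, H r = ∫ x in (0:ℝ)..π, Real.exp (-(r * Real.cos x)) * (Real.sin x) ^ (n - 1))
    (hH1 : ∀ r, H1 r =
      -∫ x in (0:ℝ)..π, Real.cos x * Real.exp (-(r * Real.cos x)) * (Real.sin x) ^ (n - 1))
    (hH2 : ∀ r, H2 r =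
      ∫ x in (0:ℝ)..π, (Real.cos x) ^ 2 * Real.exp (-(r * Real.cos x)) * (Real.sin x) ^ (n - 1)) :
    ∀ r : ℝ, 0 < r →
      (H1 r) ^ 2 < H r * H2 r ∧ 0 < deriv (fun s => H1 s / H s) r := by
  intro r hr
  set k := n - 1 with hk
  have hHpos : 0 < H r := by rw [hH]; exact hpos_base k r
  have hHne : H r ≠ 0 := ne_of_gt hHpos
  set t : ℝ := H1 r / H r with htdef
  -- expansion
  have hint1 : IntervalIntegrable (fun x => Real.exp (-(r * Real.cos x)) * (Real.sin x) ^ k)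
      volume 0 π := (by fun_prop : Continuous _).intervalIntegrable 0 π
  have hint2 : IntervalIntegrable
      (fun x => Real.cos x * Real.exp (-(r * Real.cos x)) * (Real.sin x) ^ k) volume 0 π :=
    (by fun_prop : Continuous _).intervalIntegrable 0 π
  have hint3 : IntervalIntegrable
      (fun x => (Real.cos x)^2 * Real.exp (-(r * Real.cos x)) * (Real.sin x) ^ k) volume 0 π :=
    (by fun_prop : Continuous _).intervalIntegrable 0 π
  have hexp : (∫ x in (0:ℝ)..π, (Real.cos x + t)^2 * Real.exp (-(r * Real.cos x)) * (Real.sin x) ^ k)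
      = H2 r + 2 * t * (-H1 r) + t^2 * H r := by
    have : ∀ x, (Real.cos x + t)^2 * Real.exp (-(r * Real.cos x)) * (Real.sin x) ^ k
        = (Real.cos x)^2 * Real.exp (-(r * Real.cos x)) * (Real.sin x) ^ k
          + (2 * t) * (Real.cos x * Real.exp (-(r * Real.cos x)) * (Real.sin x) ^ k)
          + t^2 * (Real.exp (-(r * Real.cos x)) * (Real.sin x) ^ k) := fun x => by ring
    rw [intervalIntegral.integral_congr (fun x _ => this x)]
    rw [intervalIntegral.integral_add (hint3.add ((hint2.const_mul _)))
        (hint1.const_mul _),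
      intervalIntegral.integral_add hint3 (hint2.const_mul _),
      intervalIntegral.integral_const_mul, intervalIntegral.integral_const_mul,
      hH2, hH, hH1]
    ring
  have hK := kpos k t r
  rw [hexp] at hK
  have hCS : (H1 r) ^ 2 < H r * H2 r := by
    have ht2 : t * H r = H1 r := div_mul_cancel₀ _ hHne
    have hexpand : H2 r + 2 * t * (-H1 r) + t^2 * H r = H2 r - (H1 r)^2 / H r := by
      field_simp [htdef]
      rw [← ht2]; ring
    rw [hexpand] at hK
    have := (div_lt_iff₀ hHpos).1 (by linarith : (H1 r)^2 / H r < H2 r)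
    linarith
  refine ⟨hCS, ?_⟩
  -- derivatives
  have hdH : HasDerivAt H (H1 r) r := by
    have h1 := deriv_under k (fun _ => 1) continuous_const (fun x => by norm_num) r
    have heq : (fun s => ∫ x in (0:ℝ)..π,
        (1:ℝ) * Real.exp (-(s * Real.cos x)) * (Real.sin x) ^ k) = H := by
      funext s; rw [hH s]; simp
    have hval : (∫ x in (0:ℝ)..π,
        (1:ℝ) * (-Real.cos x) * Real.exp (-(r * Real.cos x)) * (Real.sin x) ^ k) = H1 r := by
      rw [hH1, ← intervalIntegral.integral_neg]
      apply intervalIntegral.integral_congr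
      intro x _; ring
    rw [heq, hval] at h1; exact h1
  have hdH1 : HasDerivAt H1 (H2 r) r := by
    have h1 := deriv_under k Real.cos Real.continuous_cos (fun x => Real.abs_cos_le_one x) r
    have h2 := h1.neg
    have heq : (fun s => -∫ x in (0:ℝ)..π,
        Real.cos x * Real.exp (-(s * Real.cos x)) * (Real.sin x) ^ k) = H1 := by
      funext s; rw [hH1 s]
    have hval : -(∫ x in (0:ℝ)..π,
        Real.cos x * (-Real.cos x) * Real.exp (-(r * Real.cos x)) * (Real.sin x) ^ k) = H2 r := by
      rw [hH2, ← intervalIntegral.integral_neg]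
      apply intervalIntegral.integral_congr
      intro x _; ring
    rw [← heq, ← hval]; exact h2
  have hq := hdH1.div hdH hHne
  rw [show (fun s => H1 s / H s) = H1 / H from rfl, hq.deriv]
  have hnum : 0 < H2 r * H r - H1 r * H1 r := by nlinarith
  positivity
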